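/- The automorphism group of the affine Grassmann code C^A(ℓ,m) contains a subgroup of order q^{ℓℓ'}·∏_{i=0}^{ℓ'−1}(q^{ℓ'} − q^i), namely a subgroup isomorphic to M_{ℓ×ℓ'}(F_q) ⋊ GL_{ℓ'}(F_q). -/

import Mathlib

open MvPolynomial

/-- The minor of the generic `ℓ × ℓ'` matrix of indeterminates determined by the
rows `r` and columns `c`. -/
noncomputable def genMinor {F : Type*} [Field F] (ℓ ℓ' k : ℕ)
    (r : Fin k → Fin ℓ) (c : Fin k → Fin ℓ') : MvPolynomial (Fin ℓ × Fin ℓ') F :=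
  (Matrix.of fun i j => (X (r i, c j) : MvPolynomial (Fin ℓ × Fin ℓ') F)).det

/-- The set of all minors (of all orders `0 ≤ k ≤ ℓ`, the order-`0` minor being `1`)
of the generic `ℓ × ℓ'` matrix, as elements of the polynomial ring. -/
def minorSet (F : Type*) [Field F] (ℓ ℓ' : ℕ) : Set (MvPolynomial (Fin ℓ × Fin ℓ') F) :=
  {p | ∃ (k : ℕ) (r : Fin k → Fin ℓ) (c : Fin k → Fin ℓ'),
    StrictMono r ∧ StrictMono c ∧ p = genMinor ℓ ℓ' k r c}

/-- The evaluation map, sending a polynomial to the tuple of its values at all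
`ℓ × ℓ'` matrices over `F`, as a linear map. -/
noncomputable def evLM (F : Type*) [Field F] (ℓ ℓ' : ℕ) :
    MvPolynomial (Fin ℓ × Fin ℓ') F →ₗ[F] (Matrix (Fin ℓ) (Fin ℓ') F → F) :=
  (aeval (fun x : Fin ℓ × Fin ℓ' => fun P : Matrix (Fin ℓ) (Fin ℓ') F => P x.1 x.2)).toLinearMap

/-- The affine Grassmann code `C^A(ℓ, ℓ+ℓ')`: the image of the span of all minors of
the generic `ℓ × ℓ'` matrix under the evaluation map. -/
noncomputable def affGrassCode (F : Type*) [Field F] (ℓ ℓ' : ℕ) :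
    Submodule F (Matrix (Fin ℓ) (Fin ℓ') F → F) :=
  Submodule.map (evLM F ℓ ℓ') (Submodule.span F (minorSet F ℓ ℓ'))

/-- The Hamming weight of a codeword: the number of nonzero coordinates. -/
noncomputable def wt {F : Type*} [Field F] {ℓ ℓ' : ℕ} (c : Matrix (Fin ℓ) (Fin ℓ') F → F) : ℕ :=
  Nat.card {P : Matrix (Fin ℓ) (Fin ℓ') F // c P ≠ 0}

namespace AffGrassAux

variable {F : Type*} [Field F] {ℓ ℓ' : ℕ}

/-- Any injective tuple factors as a strictly monotone tuple composed with a permutation. -/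
lemma exists_strictMono_comp {k n : ℕ} (f : Fin k → Fin n) (hf : Function.Injective f) :
    ∃ (g : Fin k → Fin n) (σ : Equiv.Perm (Fin k)), StrictMono g ∧ ∀ i, f i = g (σ i) := by
  classical
  set s : Finset (Fin n) := Finset.image f Finset.univ with hs
  have hcard : s.card = k := by
    rw [hs, Finset.card_image_of_injective _ hf, Finset.card_univ, Fintype.card_fin]
  set g : Fin k ↪o Fin n := s.orderEmbOfFin hcard with hg
  have hrange : Set.range f = Set.range ⇑g := by
    rw [hg, Finset.range_orderEmbOfFin]
    ext x
    simp [hs, eq_comm]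
  have hginj : Function.Injective ⇑g := g.injective
  refine ⟨⇑g, ((Equiv.ofInjective f hf).trans ((Equiv.setCongr hrange).trans
      (Equiv.ofInjective ⇑g hginj).symm)), g.strictMono, fun i => ?_⟩
  simp only [Equiv.trans_apply]
  have h := Equiv.apply_ofInjective_symm hginj
    ((Equiv.setCongr hrange) ((Equiv.ofInjective f hf) i))
  rw [h]
  rfl

/-- Minors with arbitrary (not necessarily monotone) row and column indices lie in the
span of the (monotone) minors. -/
lemma genMinor_mem_span (k : ℕ) (r : Fin k → Fin ℓ) (c : Fin k → Fin ℓ') :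
    genMinor ℓ ℓ' k r c ∈ Submodule.span F (minorSet F ℓ ℓ') := by
  classical
  by_cases hr : Function.Injective r
  · by_cases hc : Function.Injective c
    · obtain ⟨r₀, σ, hr₀, hrσ⟩ := exists_strictMono_comp r hr
      obtain ⟨c₀, τ, hc₀, hcτ⟩ := exists_strictMono_comp c hc
      have hmem : (Matrix.of fun i j =>
          (X (r₀ i, c₀ j) : MvPolynomial (Fin ℓ × Fin ℓ') F)).det
          ∈ Submodule.span F (minorSet F ℓ ℓ') :=
        Submodule.subset_span ⟨k, r₀, c₀, hr₀, hc₀, rfl⟩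
      have hM : (Matrix.of fun i j => (X (r i, c j) : MvPolynomial (Fin ℓ × Fin ℓ') F))
          = ((Matrix.of fun i j =>
              (X (r₀ i, c₀ j) : MvPolynomial (Fin ℓ × Fin ℓ') F)).submatrix
              σ id).submatrix id τ := by
        ext i j
        simp [hrσ, hcτ]
      unfold genMinor
      rw [hM, Matrix.det_permute', Matrix.det_permute]
      rcases Int.units_eq_one_or (Equiv.Perm.sign τ) with h1 | h1 <;>
        rcases Int.units_eq_one_or (Equiv.Perm.sign σ) with h2 | h2 <;>
        simp only [h1, h2, Units.val_one, Units.val_neg, Int.cast_one, Int.cast_neg,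
          one_mul, neg_mul, mul_neg, neg_neg, mul_one] <;>
        first
          | exact hmem
          | exact Submodule.neg_mem _ hmem
    · rw [Function.not_injective_iff] at hc
      obtain ⟨j, j', hcj, hjj'⟩ := hc
      unfold genMinor
      rw [Matrix.det_zero_of_column_eq hjj' (fun i => by simp [hcj])]
      exact Submodule.zero_mem _
  · rw [Function.not_injective_iff] at hr
    obtain ⟨i, i', hri, hii'⟩ := hr
    unfold genMinor
    rw [Matrix.det_zero_of_row_eq hii' (funext fun j => by simp [hri])]
    exact Submodule.zero_mem _

/-- "Mixed minors", whose rows are either rows of the generic matrix or constant rows,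
lie in the span of the minors. -/
lemma mixed_mem_span (k : ℕ) (r : Fin k → Fin ℓ) (c : Fin k → Fin ℓ') (S : Finset (Fin k))
    (w : Fin k → Fin k → F) :
    (Matrix.of fun i j => if i ∈ S then (X (r i, c j) : MvPolynomial (Fin ℓ × Fin ℓ') F)
      else C (w i j)).det ∈ Submodule.span F (minorSet F ℓ ℓ') := by
  classical
  induction k with
  | zero =>
      rw [Matrix.det_fin_zero]
      refine Submodule.subset_span ⟨0, r, c, ?_, ?_, ?_⟩
      · intro a; exact a.elim0
      · intro a; exact a.elim0
      · simp [genMinor, Matrix.det_fin_zero]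
  | succ k IH =>
      by_cases hS : S = Finset.univ
      · subst hS
        have heq : (Matrix.of fun i j => if i ∈ Finset.univ then
            (X (r i, c j) : MvPolynomial (Fin ℓ × Fin ℓ') F) else C (w i j))
            = Matrix.of fun i j => X (r i, c j) := by
          ext i j; simp
        rw [heq]
        exact genMinor_mem_span _ r c
      · have hex : ∃ i₀, i₀ ∉ S := by
          by_contra h
          push_neg at h
          exact hS (Finset.eq_univ_iff_forall.mpr h)
        obtain ⟨i₀, hi₀⟩ := hex
        rw [Matrix.det_succ_row _ i₀]
        refine Submodule.sum_mem _ fun j _ => ?_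
        have hent : (Matrix.of fun i j => if i ∈ S then
            (X (r i, c j) : MvPolynomial (Fin ℓ × Fin ℓ') F) else C (w i j)) i₀ j
            = C (w i₀ j) := by simp [hi₀]
        rw [hent]
        have hsub : (Matrix.of fun i j => if i ∈ S then
            (X (r i, c j) : MvPolynomial (Fin ℓ × Fin ℓ') F) else C (w i j)).submatrix
            i₀.succAbove j.succAbove
            = Matrix.of fun i' j' =>
                if i' ∈ (Finset.univ.filter fun i' => i₀.succAbove i' ∈ S)
                then (X ((fun a => r (i₀.succAbove a)) i', (fun b => c (j.succAbove b)) j') :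
                  MvPolynomial (Fin ℓ × Fin ℓ') F)
                else C ((fun a b => w (i₀.succAbove a) (j.succAbove b)) i' j') := by
          ext i' j'
          by_cases h : i₀.succAbove i' ∈ S <;> simp [h]
        rw [hsub]
        have hIH := IH (fun a => r (i₀.succAbove a)) (fun b => c (j.succAbove b))
          (Finset.univ.filter fun i' => i₀.succAbove i' ∈ S)
          (fun a b => w (i₀.succAbove a) (j.succAbove b))
        have hscal : ((-1 : MvPolynomial (Fin ℓ × Fin ℓ') F)) ^ ((i₀ : ℕ) + (j : ℕ))
            * C (w i₀ j) = C (((-1) ^ ((i₀ : ℕ) + (j : ℕ)) * w i₀ j : F)) := by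
          rw [map_mul, map_pow, map_neg, map_one]
        rw [hscal, ← smul_eq_C_mul]
        exact Submodule.smul_mem _ _ hIH

lemma aeval_mem_span (g : Fin ℓ × Fin ℓ' → MvPolynomial (Fin ℓ × Fin ℓ') F)
    (h : ∀ m ∈ minorSet F ℓ ℓ', aeval g m ∈ Submodule.span F (minorSet F ℓ ℓ'))
    {p : MvPolynomial (Fin ℓ × Fin ℓ') F} (hp : p ∈ Submodule.span F (minorSet F ℓ ℓ')) :
    aeval g p ∈ Submodule.span F (minorSet F ℓ ℓ') := by
  have hle : Submodule.span F (minorSet F ℓ ℓ')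
      ≤ Submodule.comap (aeval g).toLinearMap (Submodule.span F (minorSet F ℓ ℓ')) :=
    Submodule.span_le.mpr h
  exact Submodule.mem_comap.mp (hle hp)

lemma evLM_apply' (p : MvPolynomial (Fin ℓ × Fin ℓ') F) (P : Matrix (Fin ℓ) (Fin ℓ') F) :
    evLM F ℓ ℓ' p P = aeval (fun y : Fin ℓ × Fin ℓ' => P y.1 y.2) p := by
  have h := MvPolynomial.comp_aeval
    (f := fun x : Fin ℓ × Fin ℓ' => fun Q : Matrix (Fin ℓ) (Fin ℓ') F => Q x.1 x.2)
    (φ := Pi.evalAlgHom F (fun _ : Matrix (Fin ℓ) (Fin ℓ') F => F) P)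
  have h' := DFunLike.congr_fun h p
  simpa [evLM] using h'

/-- A map on evaluation points is "good" if precomposition with it preserves the code. -/
def Good (τ : Matrix (Fin ℓ) (Fin ℓ') F → Matrix (Fin ℓ) (Fin ℓ') F) : Prop :=
  ∀ c ∈ affGrassCode F ℓ ℓ', (fun P => c (τ P)) ∈ affGrassCode F ℓ ℓ'

lemma good_comp {σ τ : Matrix (Fin ℓ) (Fin ℓ') F → Matrix (Fin ℓ) (Fin ℓ') F}
    (hσ : Good σ) (hτ : Good τ) : Good fun P => σ (τ P) :=
  fun c hc => hτ _ (hσ c hc)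

lemma good_congr {τ τ' : Matrix (Fin ℓ) (Fin ℓ') F → Matrix (Fin ℓ) (Fin ℓ') F}
    (h : ∀ P, τ P = τ' P) (hτ : Good τ) : Good τ' := by
  have heq : τ = τ' := funext h
  exact heq ▸ hτ

lemma good_id : Good (fun P : Matrix (Fin ℓ) (Fin ℓ') F => P) := fun c hc => hc

lemma good_of_subst (τ : Matrix (Fin ℓ) (Fin ℓ') F → Matrix (Fin ℓ) (Fin ℓ') F)
    (g : Fin ℓ × Fin ℓ' → MvPolynomial (Fin ℓ × Fin ℓ') F)
    (hg : ∀ (P : Matrix (Fin ℓ) (Fin ℓ') F) (x : Fin ℓ × Fin ℓ'),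
      aeval (fun y : Fin ℓ × Fin ℓ' => P y.1 y.2) (g x) = (τ P) x.1 x.2)
    (hspan : ∀ m ∈ minorSet F ℓ ℓ', aeval g m ∈ Submodule.span F (minorSet F ℓ ℓ')) :
    Good τ := by
  intro c hc
  obtain ⟨p, hp, rfl⟩ := hc
  refine ⟨aeval g p, aeval_mem_span g hspan hp, ?_⟩
  funext P
  have h := DFunLike.congr_fun (MvPolynomial.comp_aeval (f := g)
      (φ := aeval (fun y : Fin ℓ × Fin ℓ' => P y.1 y.2))) p
  calc evLM F ℓ ℓ' (aeval g p) P
      = aeval (fun y : Fin ℓ × Fin ℓ' => P y.1 y.2) (aeval g p) := evLM_apply' _ _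
    _ = aeval (fun x => aeval (fun y : Fin ℓ × Fin ℓ' => P y.1 y.2) (g x)) p := by
        simpa using h
    _ = aeval (fun x : Fin ℓ × Fin ℓ' => (τ P) x.1 x.2) p := by
        simp only [hg]
    _ = evLM F ℓ ℓ' p (τ P) := (evLM_apply' _ _).symm

lemma good_translate (u : Matrix (Fin ℓ) (Fin ℓ') F) :
    Good (fun P : Matrix (Fin ℓ) (Fin ℓ') F => P + u) := by
  classical
  apply good_of_subst _ (fun x : Fin ℓ × Fin ℓ' =>
    (X x : MvPolynomial (Fin ℓ × Fin ℓ') F) + C (u x.1 x.2))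
  · intro P x
    simp [Matrix.add_apply]
  · rintro m ⟨k, r, c, hr, hc, rfl⟩
    unfold genMinor
    rw [AlgHom.map_det, AlgHom.mapMatrix_apply]
    have hmap : (Matrix.of fun i j => (X (r i, c j) : MvPolynomial (Fin ℓ × Fin ℓ') F)).map
        (aeval fun x : Fin ℓ × Fin ℓ' => (X x : MvPolynomial (Fin ℓ × Fin ℓ') F) + C (u x.1 x.2))
        = Matrix.of fun i j => ((fun i j => (X (r i, c j) : MvPolynomial (Fin ℓ × Fin ℓ') F)) i j
            + (fun i j => (C (u (r i) (c j)) : MvPolynomial (Fin ℓ × Fin ℓ') F)) i j) := by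
      ext i j; simp
    rw [hmap]
    have hdet := (Matrix.detRowAlternating :
        (Fin k → MvPolynomial (Fin ℓ × Fin ℓ') F)
          [⋀^Fin k]→ₗ[MvPolynomial (Fin ℓ × Fin ℓ') F]
          MvPolynomial (Fin ℓ × Fin ℓ') F).toMultilinearMap.map_add_univ
      (fun i j => (X (r i, c j) : MvPolynomial (Fin ℓ × Fin ℓ') F))
      (fun i j => (C (u (r i) (c j)) : MvPolynomial (Fin ℓ × Fin ℓ') F))
    have hdet' : (Matrix.of fun i j =>
        ((fun i j => (X (r i, c j) : MvPolynomial (Fin ℓ × Fin ℓ') F)) i j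
          + (fun i j => (C (u (r i) (c j)) : MvPolynomial (Fin ℓ × Fin ℓ') F)) i j)).det
        = ∑ s : Finset (Fin k), Matrix.detRowAlternating
            (s.piecewise (fun i j => (X (r i, c j) : MvPolynomial (Fin ℓ × Fin ℓ') F))
              (fun i j => (C (u (r i) (c j)) : MvPolynomial (Fin ℓ × Fin ℓ') F))) := hdet
    rw [hdet']
    refine Submodule.sum_mem _ fun s _ => ?_
    have hpc : Matrix.detRowAlternating
        (s.piecewise (fun i j => (X (r i, c j) : MvPolynomial (Fin ℓ × Fin ℓ') F))
          (fun i j => (C (u (r i) (c j)) : MvPolynomial (Fin ℓ × Fin ℓ') F)))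
        = (Matrix.of fun i j => if i ∈ s then (X (r i, c j) : MvPolynomial (Fin ℓ × Fin ℓ') F)
            else C ((fun a b => u (r a) (c b)) i j)).det := by
      show Matrix.det _ = Matrix.det _
      congr 1
      ext i j
      by_cases h : i ∈ s <;> simp [Finset.piecewise, h]
    rw [hpc]
    exact mixed_mem_span k r c s _

lemma good_diag (d : Fin ℓ' → F) :
    Good (fun P : Matrix (Fin ℓ) (Fin ℓ') F => P * Matrix.diagonal d) := by
  apply good_of_subst _ (fun x : Fin ℓ × Fin ℓ' =>
    C (d x.2) * (X x : MvPolynomial (Fin ℓ × Fin ℓ') F))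
  · intro P x
    simp [Matrix.mul_diagonal, mul_comm]
  · rintro m ⟨k, r, c, hr, hc, rfl⟩
    unfold genMinor
    rw [AlgHom.map_det, AlgHom.mapMatrix_apply]
    have hmap : (Matrix.of fun i j => (X (r i, c j) : MvPolynomial (Fin ℓ × Fin ℓ') F)).map
        (aeval fun x : Fin ℓ × Fin ℓ' => C (d x.2) * (X x : MvPolynomial (Fin ℓ × Fin ℓ') F))
        = Matrix.of fun i j => (fun b => (C (d (c b)) : MvPolynomial (Fin ℓ × Fin ℓ') F)) j
          * (Matrix.of fun i j => (X (r i, c j) : MvPolynomial (Fin ℓ × Fin ℓ') F)) i j := by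
      ext i j; simp
    rw [hmap, Matrix.det_mul_row]
    have hprod : (∏ b : Fin k, (C (d (c b)) : MvPolynomial (Fin ℓ × Fin ℓ') F))
        = C (∏ b : Fin k, d (c b)) := by
      rw [map_prod]
    rw [hprod, ← smul_eq_C_mul]
    exact Submodule.smul_mem _ _ (Submodule.subset_span ⟨k, r, c, hr, hc, rfl⟩)

lemma mul_transvection_rect (P : Matrix (Fin ℓ) (Fin ℓ') F) (s t : Fin ℓ') (cv : F)
    (a : Fin ℓ) (b : Fin ℓ') :
    (P * Matrix.transvection s t cv) a b = P a b + if b = t then cv * P a s else 0 := by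
  classical
  have hE : ∀ cvv : F, (P * Matrix.single s t cvv) a b
      = if b = t then P a s * cvv else 0 := by
    intro cvv
    rw [Matrix.mul_apply, Finset.sum_eq_single s]
    · by_cases hbt : b = t
      · simp [Matrix.single, hbt]
      · have hno : ¬(s = s ∧ t = b) := fun hh => hbt hh.2.symm
        have hno' : ¬t = b := fun hh => hbt hh.symm
        simp [Matrix.single, hno', hbt]
    · intro x _ hx
      simp [Matrix.single, Ne.symm hx]
    · intro hs
      exact absurd (Finset.mem_univ s) hs
  rw [Matrix.transvection, Matrix.mul_add, Matrix.mul_one, Matrix.add_apply, hE]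
  by_cases hbt : b = t <;> simp [hbt, mul_comm]

lemma good_transvection (s t : Fin ℓ') (hst : s ≠ t) (cv : F) :
    Good (fun P : Matrix (Fin ℓ) (Fin ℓ') F => P * Matrix.transvection s t cv) := by
  classical
  apply good_of_subst _ (fun x : Fin ℓ × Fin ℓ' =>
    (X x : MvPolynomial (Fin ℓ × Fin ℓ') F) + if x.2 = t then C cv * X (x.1, s) else 0)
  · rintro P ⟨a, b⟩
    rw [mul_transvection_rect]
    by_cases h : b = t <;> simp [h]
  · rintro m ⟨k, r, c, hr, hc, rfl⟩
    unfold genMinor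
    rw [AlgHom.map_det, AlgHom.mapMatrix_apply]
    have hmap : (Matrix.of fun i j => (X (r i, c j) : MvPolynomial (Fin ℓ × Fin ℓ') F)).map
        (aeval fun x : Fin ℓ × Fin ℓ' =>
          (X x : MvPolynomial (Fin ℓ × Fin ℓ') F) + if x.2 = t then C cv * X (x.1, s) else 0)
        = Matrix.of fun i j => (X (r i, c j) : MvPolynomial (Fin ℓ × Fin ℓ') F)
            + if c j = t then C cv * X (r i, s) else 0 := by
      ext i j; simp
    rw [hmap]
    by_cases hex : ∃ j₀, c j₀ = t
    · obtain ⟨j₀, hj₀⟩ := hex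
      have huniq : ∀ j, j ≠ j₀ → c j ≠ t := fun j hj hc' => hj (hc.injective (hc'.trans hj₀.symm))
      have heq : (Matrix.of fun i j => (X (r i, c j) : MvPolynomial (Fin ℓ × Fin ℓ') F)
            + if c j = t then C cv * X (r i, s) else 0)
          = (Matrix.of fun i j =>
              (X (r i, c j) : MvPolynomial (Fin ℓ × Fin ℓ') F)).updateCol j₀
            ((fun i => (X (r i, t) : MvPolynomial (Fin ℓ × Fin ℓ') F))
              + fun i => C cv * X (r i, s)) := by
        ext i j
        rw [Matrix.updateCol_apply]
        by_cases h : j = j₀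
        · subst h; simp [hj₀]
        · simp [h, huniq j h]
      rw [heq, Matrix.det_updateCol_add]
      have h1 : (Matrix.of fun i j =>
          (X (r i, c j) : MvPolynomial (Fin ℓ × Fin ℓ') F)).updateCol j₀
          (fun i => (X (r i, t) : MvPolynomial (Fin ℓ × Fin ℓ') F))
          = Matrix.of fun i j => (X (r i, c j) : MvPolynomial (Fin ℓ × Fin ℓ') F) := by
        ext i j
        rw [Matrix.updateCol_apply]
        by_cases h : j = j₀ <;> simp [h, hj₀]
      have h2 : (fun i => C cv * (X (r i, s) : MvPolynomial (Fin ℓ × Fin ℓ') F))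
          = (C cv : MvPolynomial (Fin ℓ × Fin ℓ') F)
            • fun i => (X (r i, s) : MvPolynomial (Fin ℓ × Fin ℓ') F) := by
        funext i; simp
      rw [h1, h2, Matrix.det_updateCol_smul]
      have h3 : (Matrix.of fun i j =>
          (X (r i, c j) : MvPolynomial (Fin ℓ × Fin ℓ') F)).updateCol j₀
          (fun i => (X (r i, s) : MvPolynomial (Fin ℓ × Fin ℓ') F))
          = Matrix.of fun i j =>
            (X (r i, Function.update c j₀ s j) : MvPolynomial (Fin ℓ × Fin ℓ') F) := by
        ext i j
        rw [Matrix.updateCol_apply]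
        by_cases h : j = j₀ <;> simp [h, Function.update_apply]
      refine Submodule.add_mem _ (Submodule.subset_span ⟨k, r, c, hr, hc, rfl⟩) ?_
      rw [h3, ← smul_eq_C_mul]
      exact Submodule.smul_mem _ _ (genMinor_mem_span k r (Function.update c j₀ s))
    · push_neg at hex
      have heq : (Matrix.of fun i j => (X (r i, c j) : MvPolynomial (Fin ℓ × Fin ℓ') F)
            + if c j = t then C cv * X (r i, s) else 0)
          = Matrix.of fun i j => (X (r i, c j) : MvPolynomial (Fin ℓ × Fin ℓ') F) := by
        ext i j; simp [hex j]
      rw [heq]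
      exact Submodule.subset_span ⟨k, r, c, hr, hc, rfl⟩

lemma good_rmul_list (L : List (Matrix.TransvectionStruct (Fin ℓ') F)) :
    Good (fun P : Matrix (Fin ℓ) (Fin ℓ') F =>
      P * (L.map Matrix.TransvectionStruct.toMatrix).prod) := by
  induction L with
  | nil => exact good_congr (fun P => by simp) good_id
  | cons tst L IH =>
      have h1 : Good (fun P : Matrix (Fin ℓ) (Fin ℓ') F => P * tst.toMatrix) := by
        rcases tst with ⟨i, j, hij, cv⟩
        exact good_transvection i j hij cv
      have h2 := good_comp IH h1
      exact good_congr (fun P => by simp [Matrix.mul_assoc]) h2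

lemma good_rmul (B : Matrix (Fin ℓ') (Fin ℓ') F) :
    Good (fun P : Matrix (Fin ℓ) (Fin ℓ') F => P * B) := by
  obtain ⟨L, L', D, hB⟩ := Matrix.Pivot.exists_list_transvec_mul_diagonal_mul_list_transvec B
  have h12 := good_comp (good_diag (ℓ := ℓ) D) (good_rmul_list (ℓ := ℓ) L)
  have h123 := good_comp (good_rmul_list (ℓ := ℓ) L') h12
  refine good_congr (fun P => ?_) h123
  rw [hB]
  simp [Matrix.mul_assoc]

end AffGrassAux

section Group

open AffGrassAux

variable {F : Type*} [Field F] {ℓ ℓ' : ℕ}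

/-- The affine permutation of the evaluation points induced by `(u, A)`. -/
def affPerm (u : Matrix (Fin ℓ) (Fin ℓ') F) (A : GL (Fin ℓ') F) :
    Equiv.Perm (Matrix (Fin ℓ) (Fin ℓ') F) where
  toFun P := P * ((A⁻¹ : GL (Fin ℓ') F) : Matrix (Fin ℓ') (Fin ℓ') F) + u
  invFun P := (P - u) * ((A : GL (Fin ℓ') F) : Matrix (Fin ℓ') (Fin ℓ') F)
  left_inv P := by
    calc (P * ((A⁻¹ : GL (Fin ℓ') F) : Matrix (Fin ℓ') (Fin ℓ') F) + u - u)
          * ((A : GL (Fin ℓ') F) : Matrix (Fin ℓ') (Fin ℓ') F)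
        = P * (((A⁻¹ : GL (Fin ℓ') F) : Matrix (Fin ℓ') (Fin ℓ') F)
            * ((A : GL (Fin ℓ') F) : Matrix (Fin ℓ') (Fin ℓ') F)) := by
          rw [add_sub_cancel_right, Matrix.mul_assoc]
      _ = P := by rw [Units.inv_mul, Matrix.mul_one]
  right_inv P := by
    calc (P - u) * ((A : GL (Fin ℓ') F) : Matrix (Fin ℓ') (Fin ℓ') F)
          * ((A⁻¹ : GL (Fin ℓ') F) : Matrix (Fin ℓ') (Fin ℓ') F) + u
        = (P - u) * (((A : GL (Fin ℓ') F) : Matrix (Fin ℓ') (Fin ℓ') F)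
            * ((A⁻¹ : GL (Fin ℓ') F) : Matrix (Fin ℓ') (Fin ℓ') F)) + u := by
          rw [Matrix.mul_assoc]
      _ = P := by rw [Units.mul_inv, Matrix.mul_one, sub_add_cancel]

@[simp] lemma affPerm_apply (u : Matrix (Fin ℓ) (Fin ℓ') F) (A : GL (Fin ℓ') F)
    (P : Matrix (Fin ℓ) (Fin ℓ') F) :
    affPerm u A P = P * ((A⁻¹ : GL (Fin ℓ') F) : Matrix (Fin ℓ') (Fin ℓ') F) + u := rfl

/-- The action of `GL` on the (multiplicative) matrix group by right multiplication. -/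
def thetaAut (A : GL (Fin ℓ') F) : MulAut (Multiplicative (Matrix (Fin ℓ) (Fin ℓ') F)) where
  toFun x := Multiplicative.ofAdd (Multiplicative.toAdd x
    * ((A⁻¹ : GL (Fin ℓ') F) : Matrix (Fin ℓ') (Fin ℓ') F))
  invFun x := Multiplicative.ofAdd (Multiplicative.toAdd x
    * ((A : GL (Fin ℓ') F) : Matrix (Fin ℓ') (Fin ℓ') F))
  left_inv x := by
    simp only [toAdd_ofAdd, Matrix.mul_assoc, Units.inv_mul, Matrix.mul_one, ofAdd_toAdd]
  right_inv x := by
    simp only [toAdd_ofAdd, Matrix.mul_assoc, Units.mul_inv, Matrix.mul_one, ofAdd_toAdd]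
  map_mul' x y := by
    simp [Matrix.add_mul, ofAdd_add]

@[simp] lemma thetaAut_apply (A : GL (Fin ℓ') F) (x : Multiplicative (Matrix (Fin ℓ) (Fin ℓ') F)) :
    thetaAut A x = Multiplicative.ofAdd (Multiplicative.toAdd x
      * ((A⁻¹ : GL (Fin ℓ') F) : Matrix (Fin ℓ') (Fin ℓ') F)) := rfl

/-- The action homomorphism `GL → Aut(M)`. -/
def theta (F : Type*) [Field F] (ℓ ℓ' : ℕ) :
    GL (Fin ℓ') F →* MulAut (Multiplicative (Matrix (Fin ℓ) (Fin ℓ') F)) where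
  toFun := thetaAut
  map_one' := by
    ext x
    simp
  map_mul' A B := by
    ext x
    simp [mul_inv_rev, Units.val_mul, Matrix.mul_assoc]

/-- The homomorphism from the semidirect product into the permutations of the
evaluation points. -/
def phi (F : Type*) [Field F] (ℓ ℓ' : ℕ) :
    (Multiplicative (Matrix (Fin ℓ) (Fin ℓ') F) ⋊[theta F ℓ ℓ'] GL (Fin ℓ') F)
      →* Equiv.Perm (Matrix (Fin ℓ) (Fin ℓ') F) :=
  MonoidHom.mk' (fun x => affPerm (Multiplicative.toAdd x.left) x.right) (by
    intro x y
    apply Equiv.ext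
    intro P
    rw [Equiv.Perm.mul_apply, SemidirectProduct.mul_left, SemidirectProduct.mul_right]
    simp only [Equiv.Perm.mul_apply, affPerm_apply, SemidirectProduct.mul_left,
      SemidirectProduct.mul_right, toAdd_mul, theta, MonoidHom.coe_mk, OneHom.coe_mk,
      thetaAut_apply, toAdd_ofAdd, mul_inv_rev, Units.val_mul, Matrix.add_mul, Matrix.mul_assoc]
    abel)

@[simp] lemma phi_apply (x : Multiplicative (Matrix (Fin ℓ) (Fin ℓ') F) ⋊[theta F ℓ ℓ'] GL (Fin ℓ') F)
    (P : Matrix (Fin ℓ) (Fin ℓ') F) :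
    phi F ℓ ℓ' x P = P * ((x.right⁻¹ : GL (Fin ℓ') F) : Matrix (Fin ℓ') (Fin ℓ') F)
      + Multiplicative.toAdd x.left := rfl

lemma stdBasis_mul_entry (hℓ : 1 ≤ ℓ) (t : Fin ℓ') (B : Matrix (Fin ℓ') (Fin ℓ') F)
    (j : Fin ℓ') :
    (Matrix.single (⟨0, hℓ⟩ : Fin ℓ) t (1 : F) * B) (⟨0, hℓ⟩ : Fin ℓ) j = B t j := by
  classical
  rw [Matrix.mul_apply, Finset.sum_eq_single t]
  · simp [Matrix.single]
  · intro x _ hx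
    simp [Matrix.single, Ne.symm hx]
  · intro hs
    exact absurd (Finset.mem_univ t) hs

lemma phi_injective (hℓ : 1 ≤ ℓ) : Function.Injective (phi F ℓ ℓ') := by
  intro x y h
  have happ : ∀ P : Matrix (Fin ℓ) (Fin ℓ') F,
      P * ((x.right⁻¹ : GL (Fin ℓ') F) : Matrix (Fin ℓ') (Fin ℓ') F) + Multiplicative.toAdd x.left
      = P * ((y.right⁻¹ : GL (Fin ℓ') F) : Matrix (Fin ℓ') (Fin ℓ') F)
        + Multiplicative.toAdd y.left := by
    intro P
    have := Equiv.ext_iff.mp (congrArg (fun f => f) h) P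
    simpa using Equiv.ext_iff.mp h P
  have hu : Multiplicative.toAdd x.left = Multiplicative.toAdd y.left := by
    have := happ 0
    simpa using this
  have hmul : ∀ P : Matrix (Fin ℓ) (Fin ℓ') F,
      P * ((x.right⁻¹ : GL (Fin ℓ') F) : Matrix (Fin ℓ') (Fin ℓ') F)
      = P * ((y.right⁻¹ : GL (Fin ℓ') F) : Matrix (Fin ℓ') (Fin ℓ') F) := by
    intro P
    have := happ P
    rw [hu] at this
    exact add_right_cancel this
  have hA : ((x.right⁻¹ : GL (Fin ℓ') F) : Matrix (Fin ℓ') (Fin ℓ') F)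
      = ((y.right⁻¹ : GL (Fin ℓ') F) : Matrix (Fin ℓ') (Fin ℓ') F) := by
    ext t j
    have h1 := hmul (Matrix.single ⟨0, hℓ⟩ t (1 : F))
    have h2 := congrFun (congrFun h1 ⟨0, hℓ⟩) j
    rwa [stdBasis_mul_entry hℓ, stdBasis_mul_entry hℓ] at h2
  have hright : x.right = y.right := inv_injective (Units.ext hA)
  have hleft : x.left = y.left := Multiplicative.toAdd.injective hu
  cases x; cases y
  simp only at hu hright hleft
  simp [hleft, hright]

end Group

/-- The (permutation) automorphism group of the affine Grassmann code contains a
subgroup of order `q^(ℓℓ') ∏_{i=0}^{ℓ'-1}(q^{ℓ'} - q^i)`, isomorphic to the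
semidirect product `M_{ℓ×ℓ'}(F_q) ⋊ GL_{ℓ'}(F_q)`. -/
theorem affGrassCode_aut_subgroup (F : Type*) [Field F] [Fintype F] (q ℓ ℓ' : ℕ)
    (hq : Fintype.card F = q) (hℓ : 1 ≤ ℓ) (hℓℓ' : ℓ ≤ ℓ') :
    ∃ H : Subgroup (Equiv.Perm (Matrix (Fin ℓ) (Fin ℓ') F)),
      (∀ σ ∈ H, ∀ c ∈ affGrassCode F ℓ ℓ', (fun P => c (σ P)) ∈ affGrassCode F ℓ ℓ')
        ∧ Nat.card H = q ^ (ℓ * ℓ') * ∏ i ∈ Finset.range ℓ', (q ^ ℓ' - q ^ i)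
        ∧ ∃ θ : GL (Fin ℓ') F →* MulAut (Multiplicative (Matrix (Fin ℓ) (Fin ℓ') F)),
            Nonempty
              ((Multiplicative (Matrix (Fin ℓ) (Fin ℓ') F) ⋊[θ] GL (Fin ℓ') F) ≃* H) := by
  classical
  subst hq
  refine ⟨(phi F ℓ ℓ').range, ?_, ?_, theta F ℓ ℓ', ⟨MonoidHom.ofInjective (phi_injective hℓ)⟩⟩
  · intro σ hσ
    obtain ⟨x, rfl⟩ := MonoidHom.mem_range.mp hσ
    have hg : AffGrassAux.Good (fun P : Matrix (Fin ℓ) (Fin ℓ') F =>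
        P * ((x.right⁻¹ : GL (Fin ℓ') F) : Matrix (Fin ℓ') (Fin ℓ') F)
          + Multiplicative.toAdd x.left) :=
      AffGrassAux.good_comp (AffGrassAux.good_translate _) (AffGrassAux.good_rmul _)
    intro c hc
    exact hg c hc
  · have e1 : Nat.card (phi F ℓ ℓ').range
        = Nat.card (Multiplicative (Matrix (Fin ℓ) (Fin ℓ') F) ⋊[theta F ℓ ℓ'] GL (Fin ℓ') F) :=
      (Nat.card_congr (MonoidHom.ofInjective (phi_injective hℓ)).toEquiv).symm
    have e2 : Nat.card (Multiplicative (Matrix (Fin ℓ) (Fin ℓ') F) ⋊[theta F ℓ ℓ'] GL (Fin ℓ') F)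
        = Nat.card (Multiplicative (Matrix (Fin ℓ) (Fin ℓ') F)) * Nat.card (GL (Fin ℓ') F) := by
      have eqv : (Multiplicative (Matrix (Fin ℓ) (Fin ℓ') F) ⋊[theta F ℓ ℓ'] GL (Fin ℓ') F)
          ≃ (Multiplicative (Matrix (Fin ℓ) (Fin ℓ') F)) × GL (Fin ℓ') F :=
        ⟨fun z => (z.left, z.right), fun p => ⟨p.1, p.2⟩, fun z => by cases z; rfl,
          fun p => rfl⟩
      rw [Nat.card_congr eqv, Nat.card_prod]
    have e3 : Nat.card (Multiplicative (Matrix (Fin ℓ) (Fin ℓ') F))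
        = Fintype.card F ^ (ℓ * ℓ') := by
      rw [Nat.card_congr (Multiplicative.toAdd (α := Matrix (Fin ℓ) (Fin ℓ') F)),
        Nat.card_congr (Matrix.of (m := Fin ℓ) (n := Fin ℓ') (α := F)).symm,
        Nat.card_eq_fintype_card, Fintype.card_fun, Fintype.card_fun, Fintype.card_fin,
        Fintype.card_fin, ← pow_mul, mul_comm ℓ' ℓ]
    have e4 : Nat.card (GL (Fin ℓ') F)
        = ∏ i ∈ Finset.range ℓ', (Fintype.card F ^ ℓ' - Fintype.card F ^ i) := by
      rw [Matrix.card_GL_field]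
      exact Fin.prod_univ_eq_prod_range
        (fun i => Fintype.card F ^ ℓ' - Fintype.card F ^ i) ℓ'
    rw [e1, e2, e3, e4]
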